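/- arXiv:2406.19854 — 2 statements merged into one kernel-verified Lean document; each statement's English description precedes it below -/
import Mathlib

section
/- If X is a finite connected groupoid (a symmetric set with X_1 finite, connected, for which 𝓔_T is a bijection for every n ≥ 1 and every spine T of [n]) and x ∈ X_0 is any object, then p(X) + 1 = |hom(x,x)| × |X_0|, where hom(x,x) denotes the set of edges with both domain and codomain x. -/
/-- A symmetric (simplicial) set: a functor `Υᵒᵖ → Set`, where `Υ` has objects
`[n] = {0,…,n}` (encoded as `Fin (n+1)`) and all functions as morphisms.
For `α : [m] → [n]` and `x ∈ X_n`, `act α x` is `x · α ∈ X_m`. -/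
structure SymSet where
  obj : ℕ → Type
  act : ∀ {m n : ℕ}, (Fin (m + 1) → Fin (n + 1)) → obj n → obj m
  act_id : ∀ {n : ℕ} (x : obj n), act id x = x
  act_comp : ∀ {m n k : ℕ} (α : Fin (m + 1) → Fin (n + 1)) (β : Fin (n + 1) → Fin (k + 1))
      (x : obj k), act α (act β x) = act (β ∘ α) x

namespace SymSet

/-- `x_{ij} ∈ X_1`, the action on `x ∈ X_n` of the map `[1] → [n]` with `0 ↦ i`, `1 ↦ j`. -/
def edge (X : SymSet) {n : ℕ} (i j : Fin (n + 1)) (x : X.obj n) : X.obj 1 :=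
  X.act (fun t : Fin 2 => if t = 0 then i else j) x

/-- The domain of an edge, its image under `ι₀ : [0] → [1]`, `0 ↦ 0`. -/
def edgeDom (X : SymSet) (f : X.obj 1) : X.obj 0 :=
  X.act (fun _ : Fin 1 => (0 : Fin 2)) f

/-- The codomain of an edge, its image under `ι₁ : [0] → [1]`, `0 ↦ 1`. -/
def edgeCod (X : SymSet) (f : X.obj 1) : X.obj 0 :=
  X.act (fun _ : Fin 1 => (1 : Fin 2)) f

/-- The identity edge `id_a` on an object `a ∈ X_0`, induced by the unique map `[1] → [0]`. -/
def identityEdge (X : SymSet) (a : X.obj 0) : X.obj 1 :=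
  X.act (fun _ : Fin 2 => (0 : Fin 1)) a

/-- An edge is an identity if it is in the image of `X_0 → X_1`. -/
def IsIdentityEdge (X : SymSet) (f : X.obj 1) : Prop :=
  ∃ a : X.obj 0, f = X.identityEdge a

/-- The tuple of edges `x_{ij}` (for `i < j` an edge `{i,j}` of the spine `T`)
associated to an `n`-simplex `x`. -/
def spineTuple (X : SymSet) {n : ℕ} (T : SimpleGraph (Fin (n + 1))) (x : X.obj n) :
    ∀ i j : Fin (n + 1), i < j → T.Adj i j → X.obj 1 :=
  fun i j _ _ => X.edge i j x

/-- Membership in `lim_T X`: the components have matching endpoints. -/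
def IsSpineLim (X : SymSet) {n : ℕ} (T : SimpleGraph (Fin (n + 1)))
    (e : ∀ i j : Fin (n + 1), i < j → T.Adj i j → X.obj 1) : Prop :=
  ∃ v : Fin (n + 1) → X.obj 0, ∀ (i j : Fin (n + 1)) (hlt : i < j) (h : T.Adj i j),
    X.edgeDom (e i j hlt h) = v i ∧ X.edgeCod (e i j hlt h) = v j

/-- The limit `lim_T X` of the diagram associated to a spine `T`. -/
def SpineLim (X : SymSet) {n : ℕ} (T : SimpleGraph (Fin (n + 1))) : Type :=
  { e : ∀ i j : Fin (n + 1), i < j → T.Adj i j → X.obj 1 // X.IsSpineLim T e }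

lemma spineTuple_isSpineLim (X : SymSet) {n : ℕ} (T : SimpleGraph (Fin (n + 1)))
    (x : X.obj n) : X.IsSpineLim T (X.spineTuple T x) := by
  refine ⟨fun i => X.act (fun _ : Fin 1 => i) x, fun i j hlt h => ⟨?_, ?_⟩⟩
  · show X.act _ (X.act _ x) = _
    rw [X.act_comp]
    show X.act ((fun t : Fin 2 => if t = 0 then i else j) ∘ fun _ : Fin 1 => 0) x
      = X.act (fun _ : Fin 1 => i) x
    congr 1
  · show X.act _ (X.act _ x) = _
    rw [X.act_comp]
    show X.act ((fun t : Fin 2 => if t = 0 then i else j) ∘ fun _ : Fin 1 => 1) x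
      = X.act (fun _ : Fin 1 => j) x
    congr 1

/-- The map `𝓔_T : X_n → lim_T X`. -/
def spineMap (X : SymSet) {n : ℕ} (T : SimpleGraph (Fin (n + 1))) (x : X.obj n) :
    X.SpineLim T :=
  ⟨X.spineTuple T x, X.spineTuple_isSpineLim T x⟩

/-- A symmetric set is *spiny* if `𝓔_T` is injective for every `n ≥ 1` and
every spine `T` of `[n]` (a tree with vertex set `[n]`). -/
def Spiny (X : SymSet) : Prop :=
  ∀ n : ℕ, 1 ≤ n → ∀ T : SimpleGraph (Fin (n + 1)), T.IsTree →
    Function.Injective (X.spineMap T)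

/-- An element `x ∈ X_n` is degenerate if `x = y · σ` for some noninvertible
surjection `σ : [n] → [k]`. -/
def Degenerate (X : SymSet) {n : ℕ} (x : X.obj n) : Prop :=
  ∃ (k : ℕ) (σ : Fin (n + 1) → Fin (k + 1)) (y : X.obj k),
    Function.Surjective σ ∧ ¬ Function.Bijective σ ∧ x = X.act σ y

/-- A symmetric subset (subfunctor) of `X`. -/
structure SymSubset (X : SymSet) where
  carrier : ∀ n : ℕ, Set (X.obj n)
  act_mem : ∀ {m n : ℕ} (α : Fin (m + 1) → Fin (n + 1)) {x : X.obj n},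
    x ∈ carrier n → X.act α x ∈ carrier m

/-- `X` is `n`-skeletal: the smallest symmetric subset of `X` containing all
of its `n`-simplices is all of `X`. -/
def IsSkeletal (X : SymSet) (n : ℕ) : Prop :=
  ∀ Y : SymSubset X, (∀ x : X.obj n, x ∈ Y.carrier n) →
    ∀ (m : ℕ) (x : X.obj m), x ∈ Y.carrier m

/-- `X` has dimension `n`: it is `n`-skeletal but not `k`-skeletal for `k < n`
(for `n ≥ 1` this is equivalent to not being `(n-1)`-skeletal). -/
def HasDim (X : SymSet) (n : ℕ) : Prop :=
  X.IsSkeletal n ∧ ∀ k : ℕ, k < n → ¬ X.IsSkeletal k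

/-- Two objects are related if there is an edge between them (in either direction). -/
def EdgeRel (X : SymSet) (a b : X.obj 0) : Prop :=
  ∃ f : X.obj 1, (X.edgeDom f = a ∧ X.edgeCod f = b) ∨ (X.edgeDom f = b ∧ X.edgeCod f = a)

/-- `X` is connected: it is nonempty and any two objects are joined by a
zig-zag of edges. -/
def Connected (X : SymSet) : Prop :=
  Nonempty (X.obj 0) ∧ ∀ a b : X.obj 0, Relation.ReflTransGen X.EdgeRel a b

/-- `n_a`: the number of nonidentity edges with domain `a`. -/
noncomputable def nEdges (X : SymSet) (a : X.obj 0) : ℕ :=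
  Nat.card { f : X.obj 1 // X.edgeDom f = a ∧ ¬ X.IsIdentityEdge f }

/-- `p(X)`: the maximum of the `n_a` over all objects `a`. -/
noncomputable def pVal (X : SymSet) : ℕ := ⨆ a : X.obj 0, X.nEdges a

/-- A map of symmetric sets (a natural transformation). -/
structure SymMap (X Y : SymSet) where
  app : ∀ n : ℕ, X.obj n → Y.obj n
  naturality : ∀ {m n : ℕ} (α : Fin (m + 1) → Fin (n + 1)) (x : X.obj n),
    app m (X.act α x) = Y.act α (app n x)

/-- A map of symmetric sets is an isomorphism iff it is levelwise bijective. -/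
def SymMap.IsIso {X Y : SymSet} (F : SymMap X Y) : Prop :=
  ∀ n : ℕ, Function.Bijective (F.app n)

/-- `X` and `Y` are isomorphic symmetric sets. -/
def Isomorphic (X Y : SymSet) : Prop := ∃ F : SymMap X Y, F.IsIso

/-- The Bousfield–Segal map `𝓑_m : X_m → X_1^m`, `x ↦ (x_{01}, x_{02}, …, x_{0m})`. -/
def bousfield (X : SymSet) {m : ℕ} (x : X.obj m) : Fin m → X.obj 1 :=
  fun i => X.edge 0 i.succ x

/-- `X` is spiny in degrees below `q`: `𝓔_T` is injective for every spine `T`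
of `[n]` for each `1 ≤ n ≤ q`. -/
def SpinyBelow (X : SymSet) (q : ℕ) : Prop :=
  ∀ n : ℕ, 1 ≤ n → n ≤ q → ∀ T : SimpleGraph (Fin (n + 1)), T.IsTree →
    Function.Injective (X.spineMap T)

/-- `X` is a groupoid: `𝓔_T : X_n → lim_T X` is a bijection for every `n ≥ 1`
and every spine `T` of `[n]`. -/
def IsGroupoid (X : SymSet) : Prop :=
  ∀ n : ℕ, 1 ≤ n → ∀ T : SimpleGraph (Fin (n + 1)), T.IsTree →
    Function.Bijective (X.spineMap T)

/-- `X` is reduced: `X_0` is a singleton. -/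
def Reduced (X : SymSet) : Prop := Nonempty (X.obj 0) ∧ Subsingleton (X.obj 0)

/-- A partial group is a reduced spiny symmetric set. -/
def IsPartialGroup (X : SymSet) : Prop := X.Reduced ∧ X.Spiny

/-- The levelwise product of two symmetric sets. -/
def prod (X Y : SymSet) : SymSet where
  obj n := X.obj n × Y.obj n
  act α p := (X.act α p.1, Y.act α p.2)
  act_id p := by cases p with | mk a b => simp only [X.act_id, Y.act_id]
  act_comp α β p := by cases p with | mk a b => simp only [X.act_comp, Y.act_comp]

end SymSet
namespace SymSet
variable (X : SymSet)

/-- vertex `i` of a simplex -/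
def vtx {n : ℕ} (i : Fin (n + 1)) (x : X.obj n) : X.obj 0 :=
  X.act (fun _ : Fin 1 => i) x

lemma edgeDom_edge {n : ℕ} (i j : Fin (n + 1)) (x : X.obj n) :
    X.edgeDom (X.edge i j x) = X.vtx i x := by
  unfold edgeDom edge vtx
  rw [X.act_comp]
  rfl

lemma edgeCod_edge {n : ℕ} (i j : Fin (n + 1)) (x : X.obj n) :
    X.edgeCod (X.edge i j x) = X.vtx j x := by
  unfold edgeCod edge vtx
  rw [X.act_comp]
  rfl

lemma edgeDom_identityEdge (a : X.obj 0) : X.edgeDom (X.identityEdge a) = a := by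
  unfold edgeDom identityEdge
  rw [X.act_comp]
  have : ((fun _ : Fin 2 => (0 : Fin 1)) ∘ fun _ : Fin 1 => (0 : Fin 2)) = id := by
    funext t; exact (Subsingleton.elim _ _)
  rw [this, X.act_id]

lemma edgeCod_identityEdge (a : X.obj 0) : X.edgeCod (X.identityEdge a) = a := by
  unfold edgeCod identityEdge
  rw [X.act_comp]
  have : ((fun _ : Fin 2 => (0 : Fin 1)) ∘ fun _ : Fin 1 => (1 : Fin 2)) = id := by
    funext t; exact (Subsingleton.elim _ _)
  rw [this, X.act_id]

/-- inverse of an edge -/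
def einv (f : X.obj 1) : X.obj 1 :=
  X.act (fun t : Fin 2 => if t = 0 then 1 else 0) f

lemma edgeDom_einv (f : X.obj 1) : X.edgeDom (X.einv f) = X.edgeCod f := by
  unfold edgeDom einv edgeCod
  rw [X.act_comp]
  rfl

lemma edgeCod_einv (f : X.obj 1) : X.edgeCod (X.einv f) = X.edgeDom f := by
  unfold edgeCod einv edgeDom
  rw [X.act_comp]
  rfl

lemma einv_einv (f : X.obj 1) : X.einv (X.einv f) = f := by
  unfold einv
  rw [X.act_comp]
  have : ((fun t : Fin 2 => if t = 0 then (1 : Fin 2) else 0) ∘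
      fun t : Fin 2 => if t = 0 then 1 else 0) = id := by
    funext t; fin_cases t <;> rfl
  rw [this, X.act_id]

end SymSet
namespace SymSet

/-- the path spine 0-1-2 on `[2]` -/
def pathG : SimpleGraph (Fin 3) :=
  SimpleGraph.fromRel (fun i j => (i = 0 ∧ j = 1) ∨ (i = 1 ∧ j = 2))

/-- the star spine 1-0-2 on `[2]` -/
def starG : SimpleGraph (Fin 3) :=
  SimpleGraph.fromRel (fun i j => (i = 0 ∧ j = 1) ∨ (i = 0 ∧ j = 2))

lemma acyclic_of_edges_subset {V : Type} [Fintype V] [DecidableEq V] (G : SimpleGraph V)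
    (s : Finset (Sym2 V)) (hs : ∀ e, e ∈ G.edgeSet → e ∈ s) (hcard : s.card ≤ 2) :
    G.IsAcyclic := by
  intro v c hc
  have h3 := hc.three_le_length
  have hnodup : c.edges.Nodup := hc.isCircuit.isTrail.edges_nodup
  have hlen : c.edges.length = c.length := c.length_edges
  have hsub : c.edges.toFinset ⊆ s := by
    intro e he
    rw [List.mem_toFinset] at he
    exact hs e (c.edges_subset_edgeSet he)
  have hle := Finset.card_le_card hsub
  rw [List.toFinset_card_of_nodup hnodup] at hle
  omega

lemma pathG_adj_01 : pathG.Adj 0 1 := by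
  simp [pathG, SimpleGraph.fromRel_adj]

lemma pathG_adj_12 : pathG.Adj 1 2 := by
  simp [pathG, SimpleGraph.fromRel_adj]

lemma starG_adj_01 : starG.Adj 0 1 := by
  simp [starG, SimpleGraph.fromRel_adj]

lemma starG_adj_02 : starG.Adj 0 2 := by
  simp [starG, SimpleGraph.fromRel_adj]

lemma pathG_isTree : pathG.IsTree := by
  constructor
  · rw [SimpleGraph.connected_iff]
    refine ⟨?_, ⟨0⟩⟩
    intro u v
    have r01 := pathG_adj_01.reachable
    have r12 := pathG_adj_12.reachable
    fin_cases u <;> fin_cases v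
    · rfl
    · exact r01
    · exact r01.trans r12
    · exact r01.symm
    · rfl
    · exact r12
    · exact (r01.trans r12).symm
    · exact r12.symm
    · rfl
  · refine acyclic_of_edges_subset _ {s(0,1), s(1,2)} ?_ (by decide)
    intro e he
    induction e using Sym2.ind with
    | _ i j =>
      rw [SimpleGraph.mem_edgeSet] at he
      rw [pathG, SimpleGraph.fromRel_adj] at he
      rcases he.2 with (⟨h1, h2⟩ | ⟨h1, h2⟩) | (⟨h1, h2⟩ | ⟨h1, h2⟩) <;>
        subst h1 <;> subst h2 <;> simp [Sym2.eq_swap]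

lemma starG_isTree : starG.IsTree := by
  constructor
  · rw [SimpleGraph.connected_iff]
    refine ⟨?_, ⟨0⟩⟩
    intro u v
    have r01 := starG_adj_01.reachable
    have r02 := starG_adj_02.reachable
    fin_cases u <;> fin_cases v
    · rfl
    · exact r01
    · exact r02
    · exact r01.symm
    · rfl
    · exact r01.symm.trans r02
    · exact r02.symm
    · exact r02.symm.trans r01
    · rfl
  · refine acyclic_of_edges_subset _ {s(0,1), s(0,2)} ?_ (by decide)
    intro e he
    induction e using Sym2.ind with
    | _ i j =>
      rw [SimpleGraph.mem_edgeSet] at he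
      rw [starG, SimpleGraph.fromRel_adj] at he
      rcases he.2 with (⟨h1, h2⟩ | ⟨h1, h2⟩) | (⟨h1, h2⟩ | ⟨h1, h2⟩) <;>
        subst h1 <;> subst h2 <;> simp [Sym2.eq_swap]

end SymSet
namespace SymSet
variable (X : SymSet)

lemma path_inj (hX : X.IsGroupoid) (x y : X.obj 2)
    (h01 : X.edge 0 1 x = X.edge 0 1 y) (h12 : X.edge 1 2 x = X.edge 1 2 y) : x = y := by
  have hbij := hX 2 (by norm_num) pathG pathG_isTree
  apply hbij.1
  apply Subtype.ext
  funext i j hlt hadj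
  show X.edge i j x = X.edge i j y
  rcases hadj with ⟨hne, (⟨h1, h2⟩ | ⟨h1, h2⟩) | (⟨h1, h2⟩ | ⟨h1, h2⟩)⟩ <;>
    subst h1 <;> subst h2
  · exact h01
  · exact h12
  · exact absurd hlt (by decide)
  · exact absurd hlt (by decide)

lemma star_inj (hX : X.IsGroupoid) (x y : X.obj 2)
    (h01 : X.edge 0 1 x = X.edge 0 1 y) (h02 : X.edge 0 2 x = X.edge 0 2 y) : x = y := by
  have hbij := hX 2 (by norm_num) starG starG_isTree
  apply hbij.1
  apply Subtype.ext
  funext i j hlt hadj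
  show X.edge i j x = X.edge i j y
  rcases hadj with ⟨hne, (⟨h1, h2⟩ | ⟨h1, h2⟩) | (⟨h1, h2⟩ | ⟨h1, h2⟩)⟩ <;>
    subst h1 <;> subst h2
  · exact h01
  · exact h02
  · exact absurd hlt (by decide)
  · exact absurd hlt (by decide)

lemma comp_exists (hX : X.IsGroupoid) (f g : X.obj 1)
    (h : X.edgeCod f = X.edgeDom g) :
    ∃ x : X.obj 2, X.edge 0 1 x = f ∧ X.edge 1 2 x = g := by
  have hbij := hX 2 (by norm_num) pathG pathG_isTree
  have hlim : X.IsSpineLim pathG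
      (fun i j (_ : i < j) (_ : pathG.Adj i j) => if i = 0 then f else g) := by
    refine ⟨![X.edgeDom f, X.edgeDom g, X.edgeCod g], ?_⟩
    intro i j hlt hadj
    rcases hadj with ⟨hne, (⟨h1, h2⟩ | ⟨h1, h2⟩) | (⟨h1, h2⟩ | ⟨h1, h2⟩)⟩ <;>
      subst h1 <;> subst h2
    · simp [h]
    · simp
    · exact absurd hlt (by decide)
    · exact absurd hlt (by decide)
  obtain ⟨x, hx⟩ := hbij.2 ⟨_, hlim⟩
  have hval := congrArg Subtype.val hx
  refine ⟨x, ?_, ?_⟩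
  · have h1 := congrFun (congrFun (congrFun (congrFun hval 0) 1) (by decide)) pathG_adj_01
    simpa [spineMap, spineTuple] using h1
  · have h2 := congrFun (congrFun (congrFun (congrFun hval 1) 2) (by decide)) pathG_adj_12
    simpa [spineMap, spineTuple] using h2

lemma star_exists (hX : X.IsGroupoid) (g f : X.obj 1)
    (h : X.edgeDom g = X.edgeDom f) :
    ∃ x : X.obj 2, X.edge 0 1 x = g ∧ X.edge 0 2 x = f := by
  have hbij := hX 2 (by norm_num) starG starG_isTree
  have hlim : X.IsSpineLim starG
      (fun i j (_ : i < j) (_ : starG.Adj i j) => if j = 1 then g else f) := by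
    refine ⟨![X.edgeDom g, X.edgeCod g, X.edgeCod f], ?_⟩
    intro i j hlt hadj
    rcases hadj with ⟨hne, (⟨h1, h2⟩ | ⟨h1, h2⟩) | (⟨h1, h2⟩ | ⟨h1, h2⟩)⟩ <;>
      subst h1 <;> subst h2
    · simp
    · simp [h]
    · exact absurd hlt (by decide)
    · exact absurd hlt (by decide)
  obtain ⟨x, hx⟩ := hbij.2 ⟨_, hlim⟩
  have hval := congrArg Subtype.val hx
  refine ⟨x, ?_, ?_⟩
  · have h1 := congrFun (congrFun (congrFun (congrFun hval 0) 1) (by decide)) starG_adj_01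
    simpa [spineMap, spineTuple] using h1
  · have h2 := congrFun (congrFun (congrFun (congrFun hval 0) 2) (by decide)) starG_adj_02
    simpa [spineMap, spineTuple] using h2

end SymSet
namespace SymSet
variable (X : SymSet)

lemma comp_nonempty (hX : X.IsGroupoid) {a b c : X.obj 0}
    (hf : Nonempty {f : X.obj 1 // X.edgeDom f = a ∧ X.edgeCod f = b})
    (hg : Nonempty {g : X.obj 1 // X.edgeDom g = b ∧ X.edgeCod g = c}) :
    Nonempty {h : X.obj 1 // X.edgeDom h = a ∧ X.edgeCod h = c} := by
  obtain ⟨f, hf1, hf2⟩ := hf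
  obtain ⟨g, hg1, hg2⟩ := hg
  obtain ⟨z, hz1, hz2⟩ := X.comp_exists hX f g (by rw [hf2, hg1])
  refine ⟨X.edge 0 2 z, ?_, ?_⟩
  · rw [X.edgeDom_edge]
    have : X.edgeDom (X.edge 0 1 z) = X.vtx 0 z := X.edgeDom_edge 0 1 z
    rw [hz1] at this
    rw [← this, hf1]
  · rw [X.edgeCod_edge]
    have : X.edgeCod (X.edge 1 2 z) = X.vtx 2 z := X.edgeCod_edge 1 2 z
    rw [hz2] at this
    rw [← this, hg2]

lemma hom_nonempty (hX : X.IsGroupoid) (hconn : X.Connected) (a b : X.obj 0) :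
    Nonempty {f : X.obj 1 // X.edgeDom f = a ∧ X.edgeCod f = b} := by
  have key : ∀ c : X.obj 0, Relation.ReflTransGen X.EdgeRel a c →
      Nonempty {f : X.obj 1 // X.edgeDom f = a ∧ X.edgeCod f = c} := by
    intro c hrel
    induction hrel with
    | refl => exact ⟨X.identityEdge a, X.edgeDom_identityEdge a, X.edgeCod_identityEdge a⟩
    | tail hab hbc ih =>
      rename_i b' c'
      obtain ⟨g, (⟨hg1, hg2⟩ | ⟨hg1, hg2⟩)⟩ := hbc
      · exact X.comp_nonempty hX ih ⟨g, hg1, hg2⟩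
      · exact X.comp_nonempty hX ih
          ⟨X.einv g, by rw [X.edgeDom_einv, hg2], by rw [X.edgeCod_einv, hg1]⟩
  exact key b (hconn.2 a b)

lemma card_hom_symm (a b : X.obj 0) :
    Nat.card {f : X.obj 1 // X.edgeDom f = a ∧ X.edgeCod f = b} =
      Nat.card {f : X.obj 1 // X.edgeDom f = b ∧ X.edgeCod f = a} := by
  refine Nat.card_eq_of_bijective
    (fun f => ⟨X.einv f.val, by rw [X.edgeDom_einv, f.prop.2], by rw [X.edgeCod_einv, f.prop.1]⟩)
    ⟨?_, ?_⟩
  · intro f g hfg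
    have := congrArg Subtype.val hfg
    apply Subtype.ext
    have h2 := congrArg X.einv this
    rwa [X.einv_einv, X.einv_einv] at h2
  · intro f
    refine ⟨⟨X.einv f.val, by rw [X.edgeDom_einv, f.prop.2], by rw [X.edgeCod_einv, f.prop.1]⟩, ?_⟩
    apply Subtype.ext
    exact X.einv_einv f.val

lemma card_hom_left (hX : X.IsGroupoid) {a b : X.obj 0} (g : X.obj 1)
    (hg1 : X.edgeDom g = a) (hg2 : X.edgeCod g = b) (c : X.obj 0) :
    Nat.card {f : X.obj 1 // X.edgeDom f = b ∧ X.edgeCod f = c} =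
      Nat.card {f : X.obj 1 // X.edgeDom f = a ∧ X.edgeCod f = c} := by
  have key : ∀ k : {f : X.obj 1 // X.edgeDom f = b ∧ X.edgeCod f = c},
      ∃ z : X.obj 2, X.edge 0 1 z = g ∧ X.edge 1 2 z = k.val :=
    fun k => X.comp_exists hX g k.val (by rw [hg2, k.prop.1])
  choose t ht1 ht2 using key
  have hdom : ∀ k, X.edgeDom (X.edge 0 2 (t k)) = a := by
    intro k
    rw [X.edgeDom_edge]
    have h1 : X.edgeDom (X.edge 0 1 (t k)) = X.vtx 0 (t k) := X.edgeDom_edge 0 1 (t k)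
    rw [ht1 k] at h1
    rw [← h1, hg1]
  have hcod : ∀ k, X.edgeCod (X.edge 0 2 (t k)) = c := by
    intro k
    rw [X.edgeCod_edge]
    have h1 : X.edgeCod (X.edge 1 2 (t k)) = X.vtx 2 (t k) := X.edgeCod_edge 1 2 (t k)
    rw [ht2 k] at h1
    rw [← h1, k.prop.2]
  refine Nat.card_eq_of_bijective (fun k => ⟨X.edge 0 2 (t k), hdom k, hcod k⟩) ⟨?_, ?_⟩
  · intro k1 k2 h
    have hval : X.edge 0 2 (t k1) = X.edge 0 2 (t k2) := congrArg Subtype.val h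
    have ht : t k1 = t k2 := X.star_inj hX _ _ (by rw [ht1, ht1]) hval
    apply Subtype.ext
    rw [← ht2 k1, ← ht2 k2, ht]
  · intro f
    obtain ⟨z, hz1, hz2⟩ := X.star_exists hX g f.val (by rw [hg1, f.prop.1])
    have hk1 : X.edgeDom (X.edge 1 2 z) = b := by
      have h1 : X.edgeCod (X.edge 0 1 z) = X.vtx 1 z := X.edgeCod_edge 0 1 z
      rw [hz1] at h1
      rw [X.edgeDom_edge, ← h1, hg2]
    have hk2 : X.edgeCod (X.edge 1 2 z) = c := by
      have h1 : X.edgeCod (X.edge 0 2 z) = X.vtx 2 z := X.edgeCod_edge 0 2 z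
      rw [hz2] at h1
      rw [X.edgeCod_edge, ← h1, f.prop.2]
    refine ⟨⟨X.edge 1 2 z, hk1, hk2⟩, ?_⟩
    apply Subtype.ext
    show X.edge 0 2 (t ⟨X.edge 1 2 z, hk1, hk2⟩) = f.val
    have htz : t ⟨X.edge 1 2 z, hk1, hk2⟩ = z := by
      apply X.path_inj hX
      · rw [ht1, hz1]
      · rw [ht2]
    rw [htz, hz2]

lemma card_hom_const (hX : X.IsGroupoid) (hconn : X.Connected) (a b c d : X.obj 0) :
    Nat.card {f : X.obj 1 // X.edgeDom f = a ∧ X.edgeCod f = b} =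
      Nat.card {f : X.obj 1 // X.edgeDom f = c ∧ X.edgeCod f = d} := by
  obtain ⟨g, hg1, hg2⟩ := X.hom_nonempty hX hconn c a
  obtain ⟨g', hg1', hg2'⟩ := X.hom_nonempty hX hconn d b
  calc Nat.card {f : X.obj 1 // X.edgeDom f = a ∧ X.edgeCod f = b}
      = Nat.card {f : X.obj 1 // X.edgeDom f = c ∧ X.edgeCod f = b} :=
        X.card_hom_left hX g hg1 hg2 b
    _ = Nat.card {f : X.obj 1 // X.edgeDom f = b ∧ X.edgeCod f = c} := (X.card_hom_symm b c).symm
    _ = Nat.card {f : X.obj 1 // X.edgeDom f = d ∧ X.edgeCod f = c} :=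
        X.card_hom_left hX g' hg1' hg2' c
    _ = Nat.card {f : X.obj 1 // X.edgeDom f = c ∧ X.edgeCod f = d} := X.card_hom_symm d c

end SymSet
namespace SymSet
variable (X : SymSet)

lemma finite_obj0 (hfin : Finite (X.obj 1)) : Finite (X.obj 0) :=
  Finite.of_injective X.identityEdge (fun u v h => by
    have h2 := congrArg X.edgeDom h
    rwa [X.edgeDom_identityEdge, X.edgeDom_identityEdge] at h2)

lemma card_dom (hX : X.IsGroupoid) (hfin : Finite (X.obj 1)) (hconn : X.Connected)
    (a x : X.obj 0) :
    Nat.card {f : X.obj 1 // X.edgeDom f = a} =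
      Nat.card {f : X.obj 1 // X.edgeDom f = x ∧ X.edgeCod f = x} * Nat.card (X.obj 0) := by
  classical
  have hfin0 : Finite (X.obj 0) := X.finite_obj0 hfin
  letI : Fintype (X.obj 0) := Fintype.ofFinite _
  letI : Fintype (X.obj 1) := Fintype.ofFinite _
  have E : {f : X.obj 1 // X.edgeDom f = a} ≃
      Σ b : X.obj 0, {f : X.obj 1 // X.edgeDom f = a ∧ X.edgeCod f = b} :=
    { toFun := fun f => ⟨X.edgeCod f.val, f.val, f.prop, rfl⟩
      invFun := fun p => ⟨p.2.val, p.2.prop.1⟩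
      left_inv := fun f => rfl
      right_inv := by rintro ⟨b, f, h1, h2⟩; subst h2; rfl }
  rw [Nat.card_congr E, Nat.card_eq_fintype_card, Fintype.card_sigma]
  have hterm : ∀ b : X.obj 0, Fintype.card {f : X.obj 1 // X.edgeDom f = a ∧ X.edgeCod f = b}
      = Nat.card {f : X.obj 1 // X.edgeDom f = x ∧ X.edgeCod f = x} := by
    intro b
    rw [← Nat.card_eq_fintype_card]
    exact X.card_hom_const hX hconn a b x x
  rw [Finset.sum_congr rfl (fun b _ => hterm b), Finset.sum_const, smul_eq_mul,
    Nat.card_eq_fintype_card (α := X.obj 0), Finset.card_univ, mul_comm]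

instance instUniqueIdEdge (a : X.obj 0) :
    Unique {f : X.obj 1 // X.edgeDom f = a ∧ X.IsIdentityEdge f} where
  default := ⟨X.identityEdge a, X.edgeDom_identityEdge a, ⟨a, rfl⟩⟩
  uniq := by
    rintro ⟨f, hdom, b, rfl⟩
    have : b = a := by rw [← hdom, X.edgeDom_identityEdge]
    subst this
    rfl

lemma nEdges_add_one (hX : X.IsGroupoid) (hfin : Finite (X.obj 1)) (hconn : X.Connected)
    (a x : X.obj 0) :
    X.nEdges a + 1 =
      Nat.card {f : X.obj 1 // X.edgeDom f = x ∧ X.edgeCod f = x} * Nat.card (X.obj 0) := by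
  classical
  rw [← X.card_dom hX hfin hconn a x]
  have E : {f : X.obj 1 // X.edgeDom f = a} ≃
      {f : X.obj 1 // X.edgeDom f = a ∧ ¬ X.IsIdentityEdge f} ⊕
      {f : X.obj 1 // X.edgeDom f = a ∧ X.IsIdentityEdge f} :=
    ((Equiv.sumCompl (fun f : {f : X.obj 1 // X.edgeDom f = a} =>
        X.IsIdentityEdge f.val)).symm.trans
      (Equiv.sumComm _ _)).trans
      (Equiv.sumCongr
        (Equiv.subtypeSubtypeEquivSubtypeInter (fun f : X.obj 1 => X.edgeDom f = a)
          (fun f => ¬ X.IsIdentityEdge f))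
        (Equiv.subtypeSubtypeEquivSubtypeInter (fun f : X.obj 1 => X.edgeDom f = a)
          (fun f => X.IsIdentityEdge f)))
  rw [Nat.card_congr E, Nat.card_sum]
  have h1 : Nat.card {f : X.obj 1 // X.edgeDom f = a ∧ X.IsIdentityEdge f} = 1 :=
    Nat.card_unique
  rw [h1]
  rfl

end SymSet

/-- for a finite connected groupoid and any object `x`,
`p(X) + 1 = |hom(x,x)| × |X_0|`. -/
theorem stmt9 (X : SymSet) (hX : X.IsGroupoid) (hfin : Finite (X.obj 1))
    (hconn : X.Connected) (x : X.obj 0) :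
    X.pVal + 1 =
      Nat.card { f : X.obj 1 // X.edgeDom f = x ∧ X.edgeCod f = x } * Nat.card (X.obj 0) := by
  have hne : Nonempty (X.obj 0) := hconn.1
  have hconst : ∀ a : X.obj 0, X.nEdges a = X.nEdges x := by
    intro a
    have h1 := X.nEdges_add_one hX hfin hconn a x
    have h2 := X.nEdges_add_one hX hfin hconn x x
    omega
  have hp : X.pVal = X.nEdges x := by
    unfold SymSet.pVal
    simp only [hconst]
    exact ciSup_const
  rw [hp]
  exact X.nEdges_add_one hX hfin hconn x x
end

section
/- If X is a finite partial group (X_1 finite), then X has only finitely many im-partial subgroups, i.e., only finitely many nonempty symmetric subsets (subfunctors) Y ⊆ X. -/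
open SymSet

/-- The star graph on `Fin (n+1)` centered at `0`. -/
def starG (n : ℕ) : SimpleGraph (Fin (n + 1)) where
  Adj a b := a ≠ b ∧ (a = 0 ∨ b = 0)
  symm := ⟨fun a b h => ⟨h.1.symm, h.2.symm⟩⟩
  loopless := ⟨fun a h => h.1 rfl⟩

lemma starG_connected (n : ℕ) : (starG n).Connected := by
  have r : ∀ c : Fin (n + 1), (starG n).Reachable c 0 := by
    intro c
    by_cases hc : c = 0
    · subst hc; exact SimpleGraph.Reachable.refl _
    · exact SimpleGraph.Adj.reachable ⟨hc, Or.inr rfl⟩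
  refine ⟨fun a b => (r a).trans (r b).symm⟩

lemma starG_acyclic (n : ℕ) : (starG n).IsAcyclic := by
  intro v c hc
  cases c with
  | nil => have := hc.three_le_length; simp at this
  | @cons _ a _ h q =>
    cases q with
    | nil => have := hc.three_le_length; simp at this
    | @cons _ b _ h2 q2 =>
      cases q2 with
      | nil => have := hc.three_le_length; simp at this
      | @cons _ d _ h3 q3 =>
        have hnd := hc.support_nodup
        simp only [SimpleGraph.Walk.support_cons, List.tail_cons, List.nodup_cons] at hnd
        obtain ⟨ha, hb, _⟩ := hnd
        by_cases hv : v = 0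
        · -- then a = 0 is impossible, so b = 0; but v = 0 is in q3.support
          have hb0 : b = 0 := by
            rcases h2.2 with h' | h'
            · exact absurd (hv.trans h'.symm) h.1
            · exact h'
          exact hb (by rw [hb0, ← hv]; exact q3.end_mem_support)
        · -- then a = 0; b ≠ 0 (b ≠ a); so d = 0 = a ∈ q3.support
          have ha0 : a = 0 := by
            rcases h.2 with h' | h'
            · exact absurd h' hv
            · exact h'
          have ha' : a ≠ b ∧ a ∉ q3.support := by
            simpa [List.mem_cons, not_or] using ha
          have hb0 : b ≠ 0 := fun e => ha'.1 (ha0.trans e.symm)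
          have hd0 : d = 0 := by
            rcases h3.2 with h' | h'
            · exact absurd h' hb0
            · exact h'
          exact ha'.2 (by rw [ha0, ← hd0]; exact q3.start_mem_support)

lemma starG_isTree (n : ℕ) : (starG n).IsTree :=
  ⟨starG_connected n, starG_acyclic n⟩

lemma edge_act (X : SymSet) {m n : ℕ} (α : Fin (m + 1) → Fin (n + 1))
    (i j : Fin (m + 1)) (x : X.obj n) :
    X.edge i j (X.act α x) = X.edge (α i) (α j) x := by
  unfold SymSet.edge
  rw [X.act_comp]
  congr 1
  funext t
  by_cases ht : t = 0 <;> simp [ht]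

/-- Collapse lemma: if two star-edges agree, the simplex is fixed by the map
identifying `j` with `i`. -/
lemma collapse (X : SymSet) (hsp : X.Spiny) {n : ℕ} (hn : 1 ≤ n)
    (x : X.obj n) (i j : Fin (n + 1)) (hij : i ≠ j) (hj : j ≠ 0)
    (he : X.edge 0 i x = X.edge 0 j x) :
    X.act (fun k => if k = j then i else k) x = x := by
  apply hsp n hn (starG n) (starG_isTree n)
  apply Subtype.ext
  funext a b hlt hadj
  show X.edge a b (X.act _ x) = X.edge a b x
  have ha0 : a = 0 := by
    rcases hadj.2 with h' | h'
    · exact h'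
    · exact absurd (h' ▸ hlt) (Fin.not_lt_zero a)
  subst ha0
  rw [edge_act]
  have h0 : (if (0 : Fin (n+1)) = j then i else 0) = 0 := by simp [Ne.symm hj]
  rw [h0]
  by_cases hbj : b = j
  · simp [hbj, he]
  · simp [hbj]

/-- Every simplex in high degree factors through a lower degree. -/
lemma reduce (X : SymSet) (hsp : X.Spiny) {m : ℕ}
    [Finite (X.obj 1)] (hm : Nat.card (X.obj 1) ≤ m) (x : X.obj (m + 1)) :
    ∃ (f : Fin (m + 2) → Fin (m + 1)) (g : Fin (m + 1) → Fin (m + 2)),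
      X.act f (X.act g x) = x := by
  -- pigeonhole on k ↦ edge 0 k x
  have hni : ¬ Function.Injective (fun k : Fin (m + 2) => X.edge 0 k x) := by
    intro hinj
    have := Nat.card_le_card_of_injective _ hinj
    simp [Nat.card_eq_fintype_card] at this
    omega
  rw [Function.not_injective_iff] at hni
  obtain ⟨k, k', heq, hkk'⟩ := hni
  -- choose j ≠ 0 among k, k'
  obtain ⟨i, j, hij, hj, he⟩ :
      ∃ i j : Fin (m + 2), i ≠ j ∧ j ≠ 0 ∧ X.edge 0 i x = X.edge 0 j x := by
    by_cases hk' : k' = 0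
    · exact ⟨k', k, Ne.symm hkk', fun e => hkk' (hk'.trans e.symm).symm, heq.symm⟩
    · exact ⟨k, k', hkk', hk', heq⟩
  have hcol := collapse X hsp (by omega) x i j hij hj he
  set σ : Fin (m + 2) → Fin (m + 2) := fun k => if k = j then i else k with hσ
  have hσj : ∀ k, σ k ≠ j := by
    intro k
    by_cases hk : k = j
    · simpa [hσ, hk] using hij
    · simpa [hσ, hk] using hk
  refine ⟨fun k => Classical.choose (Fin.exists_succAbove_eq (hσj k)), j.succAbove, ?_⟩
  rw [X.act_comp]
  have : (j.succAbove ∘ fun k => Classical.choose (Fin.exists_succAbove_eq (hσj k))) = σ := by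
    funext k
    exact Classical.choose_spec (Fin.exists_succAbove_eq (hσj k))
  rw [this]
  exact hcol

lemma obj_finite (X : SymSet) (hX : X.IsPartialGroup) [Finite (X.obj 1)] (n : ℕ) :
    Finite (X.obj n) := by
  match n with
  | 0 =>
      have := hX.1.2
      exact Finite.of_subsingleton
  | m + 1 =>
      have hinj := hX.2 (m + 1) (by omega) (starG (m + 1)) (starG_isTree (m + 1))
      have : Finite (X.SpineLim (starG (m + 1))) := by
        unfold SymSet.SpineLim
        infer_instance
      exact Finite.of_injective _ hinj

lemma symSubset_ext {X : SymSet} {Y Z : SymSet.SymSubset X}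
    (h : ∀ n, Y.carrier n = Z.carrier n) : Y = Z := by
  obtain ⟨cY, aY⟩ := Y
  obtain ⟨cZ, aZ⟩ := Z
  simp only [SymSet.SymSubset.mk.injEq]
  funext n
  exact h n

lemma carrier_eq (X : SymSet) (hX : X.IsPartialGroup) [Finite (X.obj 1)]
    (Y Z : SymSet.SymSubset X)
    (h : ∀ k, k ≤ Nat.card (X.obj 1) → Y.carrier k = Z.carrier k) :
    ∀ n, Y.carrier n = Z.carrier n := by
  intro n
  induction n using Nat.strong_induction_on with
  | _ n ih =>
    by_cases hn : n ≤ Nat.card (X.obj 1)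
    · exact h n hn
    · obtain ⟨m, rfl⟩ : ∃ m, n = m + 1 := ⟨n - 1, by omega⟩
      have hm : Nat.card (X.obj 1) ≤ m := by omega
      ext x
      obtain ⟨f, g, hfg⟩ := reduce X hX.2 hm x
      constructor
      · intro hx
        rw [← hfg]
        exact Z.act_mem f ((ih m (by omega)) ▸ Y.act_mem g hx)
      · intro hx
        rw [← hfg]
        exact Y.act_mem f ((ih m (by omega)).symm ▸ Z.act_mem g hx)

/-- a finite partial group has only finitely many im-partial subgroups
(nonempty symmetric subsets). -/
theorem stmt15 (X : SymSet) (hX : X.IsPartialGroup) (hfin : Finite (X.obj 1)) :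
    Finite { Y : SymSet.SymSubset X // ∃ n : ℕ, (Y.carrier n).Nonempty } := by
  have hof : ∀ n, Finite (X.obj n) := obj_finite X hX
  set N := Nat.card (X.obj 1)
  have hΦ : Function.Injective
      (fun Y : { Y : SymSet.SymSubset X // ∃ n : ℕ, (Y.carrier n).Nonempty } =>
        (fun k : Fin (N + 1) => Y.1.carrier k : ∀ k : Fin (N + 1), Set (X.obj k))) := by
    intro Y Z hYZ
    apply Subtype.ext
    have hc : ∀ k, k ≤ N → Y.1.carrier k = Z.1.carrier k := by
      intro k hk
      exact congrFun hYZ ⟨k, by omega⟩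
    exact symSubset_ext (carrier_eq X hX Y.1 Z.1 hc)
  have : Finite (∀ k : Fin (N + 1), Set (X.obj k)) := by
    have : ∀ k : Fin (N + 1), Finite (Set (X.obj (k : ℕ))) := fun k => by
      have := hof (k : ℕ); infer_instance
    infer_instance
  exact Finite.of_injective _ hΦ
end
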